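/- Let n ≥ 1, d ≥ 2 and k ∈ {1,…,d−1} be integers, let p₁,…,pₙ ∈ ℝ^d, and suppose (X*, y*) is a minimizer of G_{t}(X,y) := t·∑_{i=1}^n yᵢ − ∑_{i=1}^n ln(yᵢ² − ‖X pᵢ‖₂²) − ln det(X) − ln det(I_d − X) over the domain D of pairs (X,y) with X symmetric, trace(X) = d−k, 0 ≺ X ≺ I_d, and ‖X pᵢ‖₂ < yᵢ for every i, for some t > 1. Let X₀ := ((d−k)/d)·I_d and (y₀)ᵢ := √(‖X₀ pᵢ‖₂² + e). Then the initialization gap ρ := G_{t}(X₀, y₀) − G_{t}(X*, y*) satisfies ρ ≤ t·∑_{i=1}^n (y₀)ᵢ − n + 2d·ln d + ∑_{i=1}^n y*ᵢ. -/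

import Mathlib

open Matrix

/-- The Euclidean (ℓ₂) norm of a vector in ℝ^d. -/
noncomputable def l2norm {d : ℕ} (u : Fin d → ℝ) : ℝ := Real.sqrt (∑ j, (u j) ^ 2)

/-- The barrier objective
`G_t(X,y) = t·∑ᵢ yᵢ − ∑ᵢ ln(yᵢ² − ‖X pᵢ‖₂²) − ln det X − ln det (I − X)`. -/
noncomputable def barrierG {n d : ℕ} (p : Fin n → Fin d → ℝ) (t : ℝ)
    (X : Matrix (Fin d) (Fin d) ℝ) (y : Fin n → ℝ) : ℝ :=
  t * ∑ i, y i - ∑ i, Real.log ((y i) ^ 2 - (l2norm (X.mulVec (p i))) ^ 2)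
    - Real.log X.det - Real.log (1 - X).det

/-- The domain `D` of the barrier problem: `X` symmetric with `trace X = d − k`,
`0 ≺ X ≺ I`, and `‖X pᵢ‖₂ < yᵢ` for every `i`. -/
def barrierDom {n d : ℕ} (k : ℕ) (p : Fin n → Fin d → ℝ)
    (X : Matrix (Fin d) (Fin d) ℝ) (y : Fin n → ℝ) : Prop :=
  Xᵀ = X ∧ X.trace = ((d - k : ℕ) : ℝ) ∧ X.PosDef ∧ (1 - X).PosDef ∧
    ∀ i, l2norm (X.mulVec (p i)) < y i

lemma eig_lt_one {d : ℕ} {X : Matrix (Fin d) (Fin d) ℝ}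
    (hX : X.IsHermitian) (h1 : (1 - X).PosDef) (i : Fin d) :
    hX.eigenvalues i < 1 := by
  set v : Fin d → ℝ := ⇑(hX.eigenvectorBasis i) with hv
  have hvne : v ≠ 0 := fun h => hX.eigenvectorBasis.orthonormal.ne_zero i
    (WithLp.ofLp_injective 2 (by rw [WithLp.ofLp_zero]; exact h))
  have hpos := h1.dotProduct_mulVec_pos hvne
  have hdot : dotProduct (star v) ((1 - X) *ᵥ v)
      = dotProduct (star v) v - hX.eigenvalues i * dotProduct (star v) v := by
    rw [sub_mulVec, dotProduct_sub, one_mulVec, hv, hX.mulVec_eigenvectorBasis,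
      dotProduct_smul, smul_eq_mul]
  have hnorm : dotProduct (star v) v = 1 := by
    have h2 := hX.eigenvectorBasis.orthonormal.1 i
    have : (inner ℝ (hX.eigenvectorBasis i) (hX.eigenvectorBasis i) : ℝ) = 1 := by
      rw [real_inner_self_eq_norm_sq, h2]; norm_num
    rw [← this, EuclideanSpace.inner_eq_star_dotProduct, dotProduct_comm]
  rw [hdot, hnorm] at hpos
  nlinarith

lemma det_le_one_of {d : ℕ} {X : Matrix (Fin d) (Fin d) ℝ}
    (hX : X.PosDef) (h1 : (1 - X).PosDef) : X.det ≤ 1 := by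
  rw [hX.isHermitian.det_eq_prod_eigenvalues]
  refine Finset.prod_le_one (fun i _ => (hX.eigenvalues_pos i).le)
    (fun i _ => (eig_lt_one hX.isHermitian h1 i).le)

lemma log_det_nonpos {d : ℕ} {X : Matrix (Fin d) (Fin d) ℝ}
    (hX : X.PosDef) (h1 : (1 - X).PosDef) : Real.log X.det ≤ 0 :=
  Real.log_nonpos hX.det_pos.le (det_le_one_of hX h1)

lemma l2norm_nonneg {d : ℕ} (u : Fin d → ℝ) : 0 ≤ l2norm u := Real.sqrt_nonneg _

/-- If `(X*, y*)` minimizes `G_t` over the domain `D` for some `t > 1`,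
and `X₀ := ((d−k)/d)·I`, `(y₀)ᵢ := √(‖X₀ pᵢ‖₂² + e)`, then the initialization gap
`ρ := G_t(X₀,y₀) − G_t(X*,y*)` satisfies
`ρ ≤ t·∑ᵢ (y₀)ᵢ − n + 2d·ln d + ∑ᵢ y*ᵢ`. -/
theorem stmt_16 (n d k : ℕ) (hn : 1 ≤ n) (hd : 2 ≤ d) (hk1 : 1 ≤ k) (hk2 : k ≤ d - 1)
    (p : Fin n → Fin d → ℝ) (t : ℝ) (ht : 1 < t)
    (Xstar : Matrix (Fin d) (Fin d) ℝ) (ystar : Fin n → ℝ)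
    (hfeas : barrierDom k p Xstar ystar)
    (hmin : ∀ (X : Matrix (Fin d) (Fin d) ℝ) (y : Fin n → ℝ),
      barrierDom k p X y → barrierG p t Xstar ystar ≤ barrierG p t X y)
    (X₀ : Matrix (Fin d) (Fin d) ℝ)
    (hX₀ : X₀ = (((d : ℝ) - k) / d) • (1 : Matrix (Fin d) (Fin d) ℝ))
    (y₀ : Fin n → ℝ)
    (hy₀ : ∀ i, y₀ i = Real.sqrt ((l2norm (X₀.mulVec (p i))) ^ 2 + Real.exp 1)) :
    barrierG p t X₀ y₀ - barrierG p t Xstar ystar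
      ≤ t * ∑ i, y₀ i - (n : ℝ) + 2 * (d : ℝ) * Real.log d + ∑ i, ystar i := by
  obtain ⟨hsym, htr, hP, hP1, hy⟩ := hfeas
  have hd0 : (0:ℝ) < d := by positivity
  have hk0 : (0:ℝ) < k := by exact_mod_cast hk1
  have hdk1 : (1:ℝ) ≤ (d:ℝ) - k := by
    have : k + 1 ≤ d := by omega
    have : ((k:ℝ)) + 1 ≤ d := by exact_mod_cast this
    linarith
  -- upper bound on barrierG p t X₀ y₀
  have hlogsum : ∑ i, Real.log ((y₀ i) ^ 2 - (l2norm (X₀.mulVec (p i))) ^ 2) = n := by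
    rw [Finset.sum_congr rfl (fun i _ => ?_), Finset.sum_const, Finset.card_fin,
      nsmul_eq_mul, mul_one]
    have h1 : (y₀ i) ^ 2 = (l2norm (X₀.mulVec (p i))) ^ 2 + Real.exp 1 := by
      rw [hy₀ i, Real.sq_sqrt (by positivity)]
    rw [h1]
    simp [Real.log_exp]
  have hdetX₀ : X₀.det = (((d : ℝ) - k) / d) ^ d := by
    rw [hX₀, det_smul, det_one, mul_one, Fintype.card_fin]
  have h1X₀ : (1 : Matrix (Fin d) (Fin d) ℝ) - X₀ = ((k : ℝ) / d) • 1 := by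
    have e : (1 : Matrix (Fin d) (Fin d) ℝ) - (((d : ℝ) - k) / d) • 1
        = (1 - ((d : ℝ) - k) / d) • 1 := by rw [sub_smul, one_smul]
    rw [hX₀, e]
    congr 1
    field_simp
    ring
  have hdet1X₀ : (1 - X₀).det = ((k : ℝ) / d) ^ d := by
    rw [h1X₀, det_smul, det_one, mul_one, Fintype.card_fin]
  have hlog1 : Real.log X₀.det = d * (Real.log ((d:ℝ) - k) - Real.log d) := by
    rw [hdetX₀, Real.log_pow, Real.log_div (by linarith) (ne_of_gt hd0)]
  have hlog2 : Real.log (1 - X₀).det = d * (Real.log k - Real.log d) := by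
    rw [hdet1X₀, Real.log_pow, Real.log_div (ne_of_gt hk0) (ne_of_gt hd0)]
  have hlogdk : 0 ≤ Real.log ((d:ℝ) - k) := Real.log_nonneg hdk1
  have hlogk : 0 ≤ Real.log (k:ℝ) := Real.log_nonneg (by exact_mod_cast hk1)
  have hG0 : barrierG p t X₀ y₀ ≤ t * ∑ i, y₀ i - n + 2 * (d:ℝ) * Real.log d := by
    rw [barrierG, hlogsum, hlog1, hlog2]
    nlinarith [hd0]
  -- lower bound on barrierG p t Xstar ystar
  have hypos : ∀ i, 0 < ystar i := fun i => lt_of_le_of_lt (l2norm_nonneg _) (hy i)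
  have hterm : ∀ i, Real.log ((ystar i) ^ 2 - (l2norm (Xstar.mulVec (p i))) ^ 2)
      ≤ 2 * ystar i - 2 := by
    intro i
    have h1 : (ystar i) ^ 2 - (l2norm (Xstar.mulVec (p i))) ^ 2 ≤ (ystar i) ^ 2 := by
      nlinarith [l2norm_nonneg (Xstar.mulVec (p i))]
    calc Real.log ((ystar i) ^ 2 - (l2norm (Xstar.mulVec (p i))) ^ 2)
        ≤ Real.log ((ystar i) ^ 2) := by
          have hpos : 0 < (ystar i) ^ 2 - (l2norm (Xstar.mulVec (p i))) ^ 2 := by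
            nlinarith [hy i, l2norm_nonneg (Xstar.mulVec (p i))]
          exact Real.log_le_log hpos h1
      _ = 2 * Real.log (ystar i) := by
          rw [sq, Real.log_mul (ne_of_gt (hypos i)) (ne_of_gt (hypos i))]; ring
      _ ≤ 2 * (ystar i - 1) := by
          have := Real.log_le_sub_one_of_pos (hypos i)
          linarith
      _ = 2 * ystar i - 2 := by ring
  have hsum : ∑ i, Real.log ((ystar i) ^ 2 - (l2norm (Xstar.mulVec (p i))) ^ 2)
      ≤ 2 * ∑ i, ystar i - 2 * n := by
    calc _ ≤ ∑ i : Fin n, (2 * ystar i - 2) := Finset.sum_le_sum (fun i _ => hterm i)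
      _ = 2 * ∑ i, ystar i - 2 * n := by
          rw [Finset.sum_sub_distrib, ← Finset.mul_sum, Finset.sum_const, Finset.card_fin]
          simp [nsmul_eq_mul]; ring
  have hlogX : Real.log Xstar.det ≤ 0 := log_det_nonpos hP hP1
  have hP' : (1 - (1 - Xstar)).PosDef := by rwa [sub_sub_cancel]
  have hlog1X : Real.log (1 - Xstar).det ≤ 0 := log_det_nonpos hP1 hP'
  have hysum : 0 ≤ ∑ i, ystar i := Finset.sum_nonneg (fun i _ => (hypos i).le)
  have hGstar : -(∑ i, ystar i) ≤ barrierG p t Xstar ystar := by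
    rw [barrierG]
    have hn0 : (0:ℝ) ≤ n := Nat.cast_nonneg n
    nlinarith [hsum, hlogX, hlog1X, hysum]
  linarith
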